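/- Let u be a good representative of a BV function on (a,b), let (c,d) ⊂ (a,b), set t = (1/(d-c))∫_c^d u, and suppose u(c) ≤ u(d) and t ≤ u(c). Then the total variation of u on [c,d] satisfies |Du|([c,d]) ≥ (u(c) - t) + (u(d) - t). -/

import Mathlib

open MeasureTheory Set

/-- for a good representative `u` of a BV function on `(a,b)`,
if `t` is the average of `u` on `(c,d) ⊂ (a,b)`, `u c ≤ u d` and `t ≤ u c`,
then the variation of `u` on `[c,d]` is at least `(u c - t) + (u d - t)`. -/
theorem stmt1 (a b c d : ℝ) (hac : a < c) (hcd : c < d) (hdb : d < b)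
    (u : ℝ → ℝ) (hbv : BoundedVariationOn u (Set.Ioo a b))
    (hu : IntegrableOn u (Set.Ioo c d))
    (hud : u c ≤ u d)
    (ht : (d - c)⁻¹ * (∫ y in Set.Ioo c d, u y) ≤ u c) :
    ENNReal.ofReal ((u c - (d - c)⁻¹ * (∫ y in Set.Ioo c d, u y)) +
        (u d - (d - c)⁻¹ * (∫ y in Set.Ioo c d, u y))) ≤
      eVariationOn u (Set.Icc c d) := by
  set t : ℝ := (d - c)⁻¹ * (∫ y in Set.Ioo c d, u y) with htdef
  -- find x ∈ Ioo c d with u x ≤ t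
  have hμ0 : (volume : Measure ℝ) (Set.Ioo c d) ≠ 0 := by
    simp [Real.volume_Ioo, hcd, sub_pos.2 hcd]
  have hμt : (volume : Measure ℝ) (Set.Ioo c d) ≠ ⊤ := by
    simp [Real.volume_Ioo]
  obtain ⟨x, hx, hxle⟩ := MeasureTheory.exists_le_setAverage hμ0 hμt hu
  have havg : ⨍ y in Set.Ioo c d, u y = t := by
    rw [MeasureTheory.setAverage_eq, measureReal_def, Real.volume_Ioo,
      ENNReal.toReal_ofReal (by linarith : (0:ℝ) ≤ d - c)]
    simp [htdef, smul_eq_mul]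
  rw [havg] at hxle
  -- partition c ≤ x ≤ d
  have hcx : c ≤ x := le_of_lt hx.1
  have hxd : x ≤ d := le_of_lt hx.2
  set p : ℕ → ℝ := fun n => if n = 0 then c else if n = 1 then x else d with hp
  have hmono : Monotone p := by
    intro m n hmn
    rcases Nat.lt_or_ge m 1 with hm | hm
    · interval_cases m
      · rcases Nat.lt_or_ge n 1 with hn | hn
        · interval_cases n; simp [hp]
        · rcases Nat.lt_or_ge n 2 with hn2 | hn2
          · interval_cases n; simp [hp, hcx]
          · have : n ≠ 0 := by omega
            have : n ≠ 1 := by omega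
            simp [hp, *]; linarith
    · rcases Nat.lt_or_ge m 2 with hm2 | hm2
      · interval_cases m
        rcases Nat.lt_or_ge n 2 with hn2 | hn2
        · interval_cases n; simp [hp]
        · have h0 : n ≠ 0 := by omega
          have h1 : n ≠ 1 := by omega
          simp [hp, h0, h1, hxd]
      · have h0 : n ≠ 0 := by omega
        have h1 : n ≠ 1 := by omega
        have h0' : m ≠ 0 := by omega
        have h1' : m ≠ 1 := by omega
        simp [hp, h0, h1, h0', h1']
  have hmem : ∀ i, p i ∈ Set.Icc c d := by
    intro i
    by_cases h0 : i = 0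
    · simp [hp, h0, le_of_lt hcd]
    · by_cases h1 : i = 1
      · simp [hp, h0, h1, hcx, hxd]
      · simp [hp, h0, h1, le_of_lt hcd]
  have key := eVariationOn.sum_le (f := u) (n := 2) hmono hmem
  refine le_trans ?_ key
  have hsum : ∑ i ∈ Finset.range 2, edist (u (p (i + 1))) (u (p i))
      = edist (u x) (u c) + edist (u d) (u x) := by
    simp [Finset.sum_range_succ, hp]
  rw [hsum]
  have e1 : edist (u x) (u c) = ENNReal.ofReal |u x - u c| := by
    rw [edist_dist, Real.dist_eq]
  have e2 : edist (u d) (u x) = ENNReal.ofReal |u d - u x| := by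
    rw [edist_dist, Real.dist_eq]
  rw [e1, e2, ← ENNReal.ofReal_add (abs_nonneg _) (abs_nonneg _)]
  apply ENNReal.ofReal_le_ofReal
  have h1 : u c - t ≤ |u x - u c| := by
    rw [abs_sub_comm]
    calc u c - t ≤ u c - u x := by linarith
    _ ≤ |u c - u x| := le_abs_self _
  have h2 : u d - t ≤ |u d - u x| := by
    calc u d - t ≤ u d - u x := by linarith
    _ ≤ |u d - u x| := le_abs_self _
  linarith
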